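/- Let α > 2 and p ∈ [1, 2] be real numbers. There exists a constant C < ∞ such that for every integer n ≥ 1 and every integer t ≥ 0, the following holds: defining the step configuration a ∈ ℤ^ℤ by a_i = t if |i| < n and a_i = 0 if |i| ≥ n, one has Σ_{(i,j)∈ℤ×ℤ, i≠j} |i−j|^{−α}·|a_i − a_j|^p ≤ C·t^p. -/

import Mathlib

/-- The step of height `t` in a box of size `n`: `a_i = t` if `|i| < n`, `a_i = 0` if `|i| ≥ n`. -/
def stepConf (n : ℕ) (t : ℤ) : ℤ → ℤ := fun i => if |i| < (n : ℤ) then t else 0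

/-- Cut interaction: `|i-j|^{-s}` for pairs crossing the cut at `c` (i.e. `i < c ≤ j`). -/
private noncomputable def Hfun (s : ℝ) (c : ℤ) : ℤ × ℤ → ℝ :=
  fun q => if q.1 < c ∧ c ≤ q.2 then |((q.1 - q.2 : ℤ) : ℝ)| ^ (-s) else 0

private lemma Hfun_nonneg (s : ℝ) (c : ℤ) (q : ℤ × ℤ) : 0 ≤ Hfun s c q := by
  unfold Hfun; split
  · positivity
  · exact le_refl 0

private def psiC (c : ℤ) : ℕ × ℕ → ℤ × ℤ := fun km => (c - 1 - km.1, c + km.2)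

private lemma psiC_inj (c : ℤ) : Function.Injective (psiC c) := by
  rintro ⟨a1, a2⟩ ⟨b1, b2⟩ h
  simp only [psiC, Prod.mk.injEq] at h
  obtain ⟨h1, h2⟩ := h
  have : a1 = b1 := by omega
  have : a2 = b2 := by omega
  simp_all

private lemma Hfun_support (s : ℝ) (c : ℤ) :
    Function.support (Hfun s c) ⊆ Set.range (psiC c) := by
  rintro ⟨i, j⟩ hq
  by_cases h : i < c ∧ c ≤ j
  · exact ⟨((c - 1 - i).toNat, (j - c).toNat), by
      simp only [psiC, Prod.mk.injEq]; omega⟩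
  · exact absurd (by unfold Hfun; simp [h] : Hfun s c (i, j) = 0) hq

private lemma Hfun_comp (s : ℝ) (c : ℤ) (km : ℕ × ℕ) :
    Hfun s c (psiC c km) = ((km.1 : ℝ) + km.2 + 1) ^ (-s) := by
  unfold Hfun psiC
  rw [if_pos (by constructor <;> omega)]
  congr 1
  have h : ((c - 1 - (km.1 : ℤ)) - (c + (km.2 : ℤ)) : ℤ) = -((km.1 : ℤ) + km.2 + 1) := by ring
  simp only [h]
  push_cast
  rw [abs_neg, abs_of_nonneg (by positivity)]

private lemma f1_summable {s : ℝ} (hs : 1 < s) :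
    Summable (fun k : ℕ => ((k : ℝ) + 1) ^ (-s)) := by
  have h0 : Summable (fun n : ℕ => (n : ℝ) ^ (-s)) := Real.summable_nat_rpow.2 (by linarith)
  have h1 := (summable_nat_add_iff 1).2 h0
  exact h1.congr fun n => by push_cast; ring_nf

private lemma F_le {s : ℝ} (hs : 0 < s) (k m : ℕ) :
    ((k : ℝ) + m + 1) ^ (-s) ≤ ((k : ℝ) + 1) ^ (-(s/2)) * ((m : ℝ) + 1) ^ (-(s/2)) := by
  have hx : (0:ℝ) < (k:ℝ) + m + 1 := by positivity
  have h2 : (0:ℝ) < ((k:ℝ) + 1) * ((m:ℝ) + 1) := by positivity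
  have e1 : (((k:ℝ) + m + 1) * ((k:ℝ) + m + 1)) ^ (-(s/2)) = ((k:ℝ) + m + 1) ^ (-s) := by
    rw [Real.mul_rpow hx.le hx.le, ← Real.rpow_add hx,
      show -(s/2) + -(s/2) = -s from by ring]
  rw [← e1]
  calc (((k:ℝ) + m + 1) * ((k:ℝ) + m + 1)) ^ (-(s/2))
      ≤ (((k:ℝ) + 1) * ((m:ℝ) + 1)) ^ (-(s/2)) := by
        apply Real.rpow_le_rpow_of_nonpos h2 ?_ (by linarith)
        nlinarith [Nat.cast_nonneg (α := ℝ) k, Nat.cast_nonneg (α := ℝ) m]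
    _ = _ := Real.mul_rpow (by positivity) (by positivity)

private lemma F_summable {s : ℝ} (hs : 2 < s) :
    Summable (fun km : ℕ × ℕ => ((km.1 : ℝ) + km.2 + 1) ^ (-s)) := by
  have h1 := f1_summable (s := s/2) (by linarith)
  have hprod := h1.mul_of_nonneg h1 (fun k => by positivity) (fun m => by positivity)
  exact Summable.of_nonneg_of_le (fun km => by positivity)
    (fun km => F_le (by linarith) km.1 km.2) hprod

private lemma Hfun_summable {s : ℝ} (hs : 2 < s) (c : ℤ) : Summable (Hfun s c) := by
  rw [← Function.Injective.summable_iff (psiC_inj c)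
    (fun q hq => Function.notMem_support.1 fun h => hq (Hfun_support s c h))]
  exact (F_summable hs).congr fun km => (Hfun_comp s c km).symm

private lemma Hfun_tsum_le {s : ℝ} (hs : 2 < s) (c : ℤ) :
    ∑' q : ℤ × ℤ, Hfun s c q
      ≤ ∑' km : ℕ × ℕ, ((km.1 : ℝ) + 1) ^ (-(s/2)) * ((km.2 : ℝ) + 1) ^ (-(s/2)) := by
  rw [← (psiC_inj c).tsum_eq (Hfun_support s c)]
  have h1 := f1_summable (s := s/2) (by linarith)
  have hprod := h1.mul_of_nonneg h1 (fun k => by positivity) (fun m => by positivity)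
  calc ∑' km : ℕ × ℕ, Hfun s c (psiC c km)
      = ∑' km : ℕ × ℕ, ((km.1 : ℝ) + km.2 + 1) ^ (-s) := tsum_congr (Hfun_comp s c)
    _ ≤ _ := Summable.tsum_le_tsum (fun km => F_le (by linarith) km.1 km.2) (F_summable hs) hprod

/-- **Energy cost of a step.** For `α > 2` and `p ∈ [1,2]` there is a constant `C < ∞` such
that for every `n ≥ 1` and every integer `t ≥ 0`, the long-range interaction energy
`Σ_{i ≠ j} |i-j|^{-α} |a_i - a_j|^p` of the step configuration `a = a^n(t)` converges and
is at most `C t^p`, uniformly in `n`. -/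
theorem step_energy_bound (α p : ℝ) (hα : 2 < α) (hp1 : 1 ≤ p) (hp2 : p ≤ 2) :
    ∃ C : ℝ, ∀ n : ℕ, 1 ≤ n → ∀ t : ℤ, 0 ≤ t →
      Summable (fun q : {q : ℤ × ℤ // q.1 ≠ q.2} =>
        |((q.1.1 - q.1.2 : ℤ) : ℝ)| ^ (-α) *
          |((stepConf n t q.1.1 - stepConf n t q.1.2 : ℤ) : ℝ)| ^ p) ∧
      ∑' q : {q : ℤ × ℤ // q.1 ≠ q.2},
          |((q.1.1 - q.1.2 : ℤ) : ℝ)| ^ (-α) *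
            |((stepConf n t q.1.1 - stepConf n t q.1.2 : ℤ) : ℝ)| ^ p
        ≤ C * (t : ℝ) ^ p := by
  classical
  set S : ℝ := ∑' km : ℕ × ℕ, ((km.1 : ℝ) + 1) ^ (-(α/2)) * ((km.2 : ℝ) + 1) ^ (-(α/2)) with hSdef
  refine ⟨4 * S, fun n hn t ht => ?_⟩
  have hp0 : p ≠ 0 := by linarith
  have htR : (0:ℝ) ≤ (t : ℝ) := by exact_mod_cast ht
  have htp : (0:ℝ) ≤ (t : ℝ) ^ p := Real.rpow_nonneg htR p
  -- the four cut functions on the subtype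
  set T1 : {q : ℤ × ℤ // q.1 ≠ q.2} → ℝ := fun q => Hfun α n q.val with hT1
  set T2 : {q : ℤ × ℤ // q.1 ≠ q.2} → ℝ := fun q => Hfun α n q.val.swap with hT2
  set T3 : {q : ℤ × ℤ // q.1 ≠ q.2} → ℝ := fun q => Hfun α (1 - n) q.val with hT3
  set T4 : {q : ℤ × ℤ // q.1 ≠ q.2} → ℝ := fun q => Hfun α (1 - n) q.val.swap with hT4
  have hsum1 : Summable T1 := (Hfun_summable hα n).comp_injective Subtype.val_injective
  have hsum2 : Summable T2 :=
    (Hfun_summable hα n).comp_injective (Prod.swap_injective.comp Subtype.val_injective)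
  have hsum3 : Summable T3 := (Hfun_summable hα (1 - n)).comp_injective Subtype.val_injective
  have hsum4 : Summable T4 :=
    (Hfun_summable hα (1 - n)).comp_injective (Prod.swap_injective.comp Subtype.val_injective)
  set G : {q : ℤ × ℤ // q.1 ≠ q.2} → ℝ := fun q => T1 q + T2 q + T3 q + T4 q with hGdef
  have hGsum : Summable G := ((hsum1.add hsum2).add hsum3).add hsum4
  have hGnn : ∀ q, 0 ≤ G q := fun q => by
    have := Hfun_nonneg α n q.val
    have := Hfun_nonneg α n q.val.swap
    have := Hfun_nonneg α (1 - n) q.val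
    have := Hfun_nonneg α (1 - n) q.val.swap
    simp only [hGdef, hT1, hT2, hT3, hT4]
    linarith
  -- pointwise bound
  have hpt : ∀ q : {q : ℤ × ℤ // q.1 ≠ q.2},
      |((q.1.1 - q.1.2 : ℤ) : ℝ)| ^ (-α) *
        |((stepConf n t q.1.1 - stepConf n t q.1.2 : ℤ) : ℝ)| ^ p ≤ (t : ℝ) ^ p * G q := by
    rintro ⟨⟨i, j⟩, hij⟩
    show |((i - j : ℤ) : ℝ)| ^ (-α) * |((stepConf n t i - stepConf n t j : ℤ) : ℝ)| ^ p
      ≤ (t : ℝ) ^ p * G ⟨(i, j), hij⟩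
    have hn1 : (1 : ℤ) ≤ (n : ℤ) := by exact_mod_cast hn
    have habs : |((j - i : ℤ) : ℝ)| = |((i - j : ℤ) : ℝ)| := by
      push_cast; rw [abs_sub_comm]
    have hGcomp : G ⟨(i, j), hij⟩ =
        Hfun α n (i, j) + Hfun α n (j, i) + Hfun α (1 - n) (i, j) + Hfun α (1 - n) (j, i) := rfl
    by_cases hi : |i| < (n : ℤ) <;> by_cases hj : |j| < (n : ℤ)
    · -- both inside: difference is 0
      simp only [stepConf, if_pos hi, if_pos hj, sub_self, Int.cast_zero, abs_zero,
        Real.zero_rpow hp0, mul_zero]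
      exact mul_nonneg htp (hGnn _)
    · -- i inside, j outside
      have hdiff : (stepConf n t i - stepConf n t j : ℤ) = t := by
        simp [stepConf, hi, hj]
      rw [hdiff, (abs_of_nonneg htR : |((t:ℤ):ℝ)| = ((t:ℤ):ℝ)), mul_comm]
      refine mul_le_mul_of_nonneg_left ?_ htp
      have hi' : -(n:ℤ) < i ∧ i < n := abs_lt.1 hi
      rcases le_abs.1 (not_lt.1 hj) with hjpos | hjneg
      · -- j ≥ n, use cut at n
        have hcond : i < (n : ℤ) ∧ (n : ℤ) ≤ j := by constructor <;> omega
        have hval : Hfun α n (i, j) = |((i - j : ℤ) : ℝ)| ^ (-α) := by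
          unfold Hfun; rw [if_pos hcond]
        rw [hGcomp, ← hval]
        have := Hfun_nonneg α n (j, i)
        have := Hfun_nonneg α (1 - n) (i, j)
        have := Hfun_nonneg α (1 - n) (j, i)
        linarith
      · -- j ≤ -n, use cut at 1 - n, swapped
        have hcond : j < (1 - n : ℤ) ∧ (1 - n : ℤ) ≤ i := by constructor <;> omega
        have hval : Hfun α (1 - n) (j, i) = |((i - j : ℤ) : ℝ)| ^ (-α) := by
          unfold Hfun; rw [if_pos hcond]; simp only; rw [habs]
        rw [hGcomp, ← hval]
        have := Hfun_nonneg α n (i, j)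
        have := Hfun_nonneg α n (j, i)
        have := Hfun_nonneg α (1 - n) (i, j)
        linarith
    · -- i outside, j inside
      have hdiff : (stepConf n t i - stepConf n t j : ℤ) = -t := by
        simp [stepConf, hi, hj]
      rw [hdiff]
      have habs2 : |((-t : ℤ) : ℝ)| = (t : ℝ) := by
        push_cast; rw [abs_neg, abs_of_nonneg htR]
      rw [habs2, mul_comm]
      refine mul_le_mul_of_nonneg_left ?_ htp
      have hj' : -(n:ℤ) < j ∧ j < n := abs_lt.1 hj
      rcases le_abs.1 (not_lt.1 hi) with hipos | hineg
      · -- i ≥ n, use cut at n, swapped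
        have hcond : j < (n : ℤ) ∧ (n : ℤ) ≤ i := by constructor <;> omega
        have hval : Hfun α n (j, i) = |((i - j : ℤ) : ℝ)| ^ (-α) := by
          unfold Hfun; rw [if_pos hcond]; simp only; rw [habs]
        rw [hGcomp, ← hval]
        have := Hfun_nonneg α n (i, j)
        have := Hfun_nonneg α (1 - n) (i, j)
        have := Hfun_nonneg α (1 - n) (j, i)
        linarith
      · -- i ≤ -n, use cut at 1 - n
        have hcond : i < (1 - n : ℤ) ∧ (1 - n : ℤ) ≤ j := by constructor <;> omega
        have hval : Hfun α (1 - n) (i, j) = |((i - j : ℤ) : ℝ)| ^ (-α) := by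
          unfold Hfun; rw [if_pos hcond]
        rw [hGcomp, ← hval]
        have := Hfun_nonneg α n (i, j)
        have := Hfun_nonneg α n (j, i)
        have := Hfun_nonneg α (1 - n) (j, i)
        linarith
    · -- both outside: difference is 0
      simp only [stepConf, if_neg hi, if_neg hj, sub_self, Int.cast_zero, abs_zero,
        Real.zero_rpow hp0, mul_zero]
      exact mul_nonneg htp (hGnn _)
  have hGsum' : Summable fun q => (t : ℝ) ^ p * G q := hGsum.mul_left _
  have hfsum : Summable (fun q : {q : ℤ × ℤ // q.1 ≠ q.2} =>
      |((q.1.1 - q.1.2 : ℤ) : ℝ)| ^ (-α) *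
        |((stepConf n t q.1.1 - stepConf n t q.1.2 : ℤ) : ℝ)| ^ p) :=
    Summable.of_nonneg_of_le (fun q => by positivity) hpt hGsum'
  refine ⟨hfsum, ?_⟩
  have hstep1 : ∑' q : {q : ℤ × ℤ // q.1 ≠ q.2},
      |((q.1.1 - q.1.2 : ℤ) : ℝ)| ^ (-α) *
        |((stepConf n t q.1.1 - stepConf n t q.1.2 : ℤ) : ℝ)| ^ p
      ≤ ∑' q, (t : ℝ) ^ p * G q := Summable.tsum_le_tsum hpt hfsum hGsum'
  rw [tsum_mul_left] at hstep1
  -- bound ∑' G by 4 S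
  have hbound : ∀ (c : ℤ) (σ : {q : ℤ × ℤ // q.1 ≠ q.2} → ℤ × ℤ), Function.Injective σ →
      ∑' q, Hfun α c (σ q) ≤ S := by
    intro c σ hσ
    calc ∑' q, Hfun α c (σ q) ≤ ∑' q : ℤ × ℤ, Hfun α c q :=
          Summable.tsum_le_tsum_of_inj σ hσ (fun q _ => Hfun_nonneg α c q) (fun q => le_rfl)
            ((Hfun_summable hα c).comp_injective hσ) (Hfun_summable hα c)
      _ ≤ S := Hfun_tsum_le hα c
  have h1 := hbound n Subtype.val Subtype.val_injective
  have h2 := hbound n (Prod.swap ∘ Subtype.val) (Prod.swap_injective.comp Subtype.val_injective)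
  have h3 := hbound (1 - n) Subtype.val Subtype.val_injective
  have h4 := hbound (1 - n) (Prod.swap ∘ Subtype.val)
    (Prod.swap_injective.comp Subtype.val_injective)
  have hGtsum : ∑' q, G q ≤ 4 * S := by
    have e : ∑' q, G q = (∑' q, T1 q) + (∑' q, T2 q) + (∑' q, T3 q) + (∑' q, T4 q) := by
      simp only [hGdef]
      rw [Summable.tsum_add ((hsum1.add hsum2).add hsum3) hsum4, Summable.tsum_add (hsum1.add hsum2) hsum3,
        Summable.tsum_add hsum1 hsum2]
    rw [e]
    have e1 : ∑' q, T1 q = ∑' q, Hfun α n (Subtype.val q) := rfl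
    have e2 : ∑' q, T2 q = ∑' q, Hfun α n ((Prod.swap ∘ Subtype.val) q) := rfl
    have e3 : ∑' q, T3 q = ∑' q, Hfun α (1 - n) (Subtype.val q) := rfl
    have e4 : ∑' q, T4 q = ∑' q, Hfun α (1 - n) ((Prod.swap ∘ Subtype.val) q) := rfl
    rw [e1, e2, e3, e4]
    linarith
  calc ∑' q : {q : ℤ × ℤ // q.1 ≠ q.2},
        |((q.1.1 - q.1.2 : ℤ) : ℝ)| ^ (-α) *
          |((stepConf n t q.1.1 - stepConf n t q.1.2 : ℤ) : ℝ)| ^ p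
      ≤ (t : ℝ) ^ p * ∑' q, G q := hstep1
    _ ≤ (t : ℝ) ^ p * (4 * S) := mul_le_mul_of_nonneg_left hGtsum htp
    _ = 4 * S * (t : ℝ) ^ p := by ring
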